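/- Adopt the directional pattern setup and assume Condition (C). For an integer L_0 with 1 ≤ L_0 ≤ L−1, define Ḡ(φ, L_0) = (1/L_0)·Σ_{l=0}^{L_0−1} G_l(φ) + (1/(L−L_0))·Σ_{l=L_0}^{L−1} G_l(φ), and define I_0(L_0) = [−2π/L + φ_B, L_0·2π/L − φ_B]. Then for every integer L_0 with L/2 < L_0 ≤ L−1 and L_0 ≠ ⌈L/2⌉, and for every φ ∈ I_0(L_0): Ḡ(φ, ⌈L/2⌉) > Ḡ(φ, L_0). -/

import Mathlib

/-- Auxiliary algebraic inequality: the balanced split beats the unbalanced one. -/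
private lemma stmt16_keyineq (m b k S1 Sm S2 S2p GSL : ℝ)
    (hm : 1 ≤ m) (hk : 1 ≤ k) (hkb : k + 1 ≤ b) (hbm : b ≤ m) (hGSL : 0 ≤ GSL)
    (hS1 : 0 ≤ S1) (hSm : 0 ≤ Sm) (hS2p : 0 ≤ S2p)
    (hS2le : S2 ≤ k * GSL) (hS2ple : S2p ≤ (k - 1) * GSL)
    (hT : GSL * (m * (m + b - 1)) < b * S1 + b * Sm + b * S2p) :
    1 / (m + b - k) * (S1 + Sm) + 1 / k * S2 < 1 / m * S1 + 1 / b * (Sm + S2) := by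
  have hmpos : (0:ℝ) < m := by linarith
  have hbpos : (0:ℝ) < b := by linarith
  have hkpos : (0:ℝ) < k := by linarith
  have hl0 : (0:ℝ) < m + b - k := by linarith
  have hMB : (0:ℝ) ≤ m - b := by linarith
  have hBK : (0:ℝ) < b - k := by linarith
  have hDp : 0 < b * (m + b - k) * k * S1 + m * (m + b - k) * k * (Sm + S2)
      - m * b * k * (S1 + Sm) - m * b * (m + b - k) * S2 := by
    have P1 : 0 ≤ Sm * (k * (m + b - k) * (m - b)) :=
      mul_nonneg hSm (mul_nonneg (mul_nonneg hkpos.le hl0.le) hMB)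
    have P2 : 0 ≤ (k * GSL - S2) * (m * (m + b - k) * (b - k)) :=
      mul_nonneg (by linarith) (mul_nonneg (mul_nonneg hmpos.le hl0.le) hBK.le)
    have P5 : 0 ≤ ((k - 1) * GSL - S2p) * (k * (b - k) * b) :=
      mul_nonneg (by linarith) (mul_nonneg (mul_nonneg hkpos.le hBK.le) hbpos.le)
    have Q : 0 < (k * (b - k)) * (b * S1 + b * Sm + b * S2p - GSL * (m * (m + b - 1))) :=
      mul_pos (mul_pos hkpos hBK) (by linarith)
    have P4 : 0 ≤ GSL * (k * (b - k) * (k - 1) * (m - b)) :=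
      mul_nonneg hGSL
        (mul_nonneg (mul_nonneg (mul_nonneg hkpos.le hBK.le) (by linarith)) hMB)
    nlinarith [P1, P2, P5, Q, P4]
  have heq : (1 / m * S1 + 1 / b * (Sm + S2))
      - (1 / (m + b - k) * (S1 + Sm) + 1 / k * S2) =
      (b * (m + b - k) * k * S1 + m * (m + b - k) * k * (Sm + S2)
        - m * b * k * (S1 + Sm) - m * b * (m + b - k) * S2)
        / (m * b * (m + b - k) * k) := by
    field_simp
    ring
  have hpos : 0 < (b * (m + b - k) * k * S1 + m * (m + b - k) * k * (Sm + S2)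
        - m * b * k * (S1 + Sm) - m * b * (m + b - k) * S2)
        / (m * b * (m + b - k) * k) := div_pos hDp (by positivity)
  linarith [heq ▸ hpos]

set_option maxHeartbeats 1000000 in
/-- key pointwise step of Theorem 2: under Condition (C), for
every group size `L_0` with `L/2 < L_0 ≤ L−1` and `L_0 ≠ ⌈L/2⌉`, and every
`φ` in the all-sidelobe region `I_0(L_0)`, the balanced grouping strictly
dominates: `Ḡ(φ, ⌈L/2⌉) > Ḡ(φ, L_0)`. -/
theorem stmt16
(L : ℕ) (hL : 2 ≤ L)
    (G : ℝ → ℝ) (hGnn : ∀ φ, 0 ≤ G φ)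
    (hGper : ∀ φ, G (φ + 2 * Real.pi) = G φ)
    (GSL φB : ℝ) (hGSL : 0 ≤ GSL)
    (hφB0 : 0 < φB) (hφBhalf : φB < Real.pi / 2)
    (hmain : ∀ φ ∈ Set.Ioo (-φB) φB, GSL < G φ)
    (hside : ∀ φ : ℝ, φB ≤ |φ| → |φ| ≤ Real.pi → G φ ≤ GSL)
    (Gl : ℕ → ℝ → ℝ)
    (hGl : ∀ l φ, Gl l φ = G (φ - l * (2 * Real.pi) / L))
-- Condition (C)
    (hC : GSL < ((L / 2 : ℕ) : ℝ) / (((L + 1) / 2 : ℕ) : ℝ) *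
      sInf ((fun φ => (1 / ((L : ℝ) - 1)) * ∑ l ∈ Finset.range (L - 1), Gl l φ) ''
        Set.Icc (φB - 2 * Real.pi / L) (((L : ℝ) - 1) * (2 * Real.pi) / L - φB)))
(Gbar : ℕ → ℝ → ℝ)
    (hGbar : ∀ L0 φ, Gbar L0 φ =
      (1 / (L0 : ℝ)) * ∑ l ∈ Finset.range L0, Gl l φ +
      (1 / ((L : ℝ) - L0)) * ∑ l ∈ Finset.Ico L0 L, Gl l φ) :
    ∀ L0 : ℕ, (L : ℝ) / 2 < (L0 : ℝ) → L0 ≤ L - 1 → L0 ≠ (L + 1) / 2 →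
      ∀ φ ∈ Set.Icc (-(2 * Real.pi) / L + φB) ((L0 : ℝ) * (2 * Real.pi) / L - φB),
        Gbar L0 φ < Gbar ((L + 1) / 2) φ := by
  intro L0 h1 h2 h3 φ hφ
  obtain ⟨hφ1, hφ2⟩ := hφ
  have hπ := Real.pi_pos
  have hLpos : (0:ℝ) < (L:ℝ) := by exact_mod_cast (by omega : 0 < L)
  have hL2L0 : L < 2 * L0 := by
    have h : (L:ℝ) < ((2 * L0 : ℕ) : ℝ) := by push_cast; linarith
    exact_mod_cast h
  set M : ℕ := (L + 1) / 2 with hMdef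
  have hML0 : M + 1 ≤ L0 := by omega
  set b : ℕ := L - M with hbdef
  set k : ℕ := L - L0 with hkdef
  clear_value M b k
  have hbL2 : b = L / 2 := by omega
  have hLMb : L = M + b := by omega
  have hLL0k : L = L0 + k := by omega
  have hk1 : 1 ≤ k := by omega
  have hkb : k + 1 ≤ b := by omega
  have hbM : b ≤ M := by omega
  have hM1 : 1 ≤ M := by omega
  have em : (1:ℝ) ≤ (M:ℝ) := by exact_mod_cast hM1
  have ek : (1:ℝ) ≤ (k:ℝ) := by exact_mod_cast hk1
  have ekb : (k:ℝ) + 1 ≤ (b:ℝ) := by exact_mod_cast hkb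
  have ebM : (b:ℝ) ≤ (M:ℝ) := by exact_mod_cast hbM
  have eL : (L:ℝ) = (M:ℝ) + (b:ℝ) := by exact_mod_cast hLMb
  have eL' : (L:ℝ) = (L0:ℝ) + (k:ℝ) := by exact_mod_cast hLL0k
  have eL0 : (L0:ℝ) = (M:ℝ) + (b:ℝ) - (k:ℝ) := by linarith
  have eS2p : ((L - 1 - L0 : ℕ):ℝ) = (k:ℝ) - 1 := by
    have h : (L - 1 - L0 : ℕ) + 1 = k := by omega
    have h' : ((L - 1 - L0 : ℕ):ℝ) + 1 = (k:ℝ) := by exact_mod_cast h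
    linarith
  have hGlnn : ∀ l (ψ : ℝ), 0 ≤ Gl l ψ := by
    intro l ψ; rw [hGl]; exact hGnn _
  -- sidelobe bound for indices in [L0, L)
  have hsid : ∀ l : ℕ, L0 ≤ l → l < L → Gl l φ ≤ GSL := by
    intro l hl1 hl2
    rw [hGl]
    have hlc1 : (L0:ℝ) ≤ (l:ℝ) := by exact_mod_cast hl1
    have hlc2 : (l:ℝ) + 1 ≤ (L:ℝ) := by exact_mod_cast hl2
    set θ : ℝ := φ - (l:ℝ) * (2 * Real.pi) / L with hθdef
    have hub : θ ≤ -φB := by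
      have h5 : (L0:ℝ) * (2 * Real.pi) / L ≤ (l:ℝ) * (2 * Real.pi) / L := by
        gcongr
      simp only [hθdef]; linarith
    have hlb : φB - 2 * Real.pi ≤ θ := by
      have hl3 : (l:ℝ) ≤ (L:ℝ) - 1 := by linarith
      have h6 : (l:ℝ) * (2 * Real.pi) / L ≤ ((L:ℝ) - 1) * (2 * Real.pi) / L := by
        gcongr
      have h7 : ((L:ℝ) - 1) * (2 * Real.pi) / L = 2 * Real.pi - 2 * Real.pi / L := by
        field_simp
      have h10 : -(2 * Real.pi) / (L:ℝ) = -(2 * Real.pi / L) := by ring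
      rw [h10] at hφ1
      simp only [hθdef]; linarith
    by_cases hcase : -Real.pi ≤ θ
    · apply hside
      · rw [abs_of_nonpos (by linarith : θ ≤ 0)]; linarith
      · rw [abs_of_nonpos (by linarith : θ ≤ 0)]; linarith
    · push_neg at hcase
      have h7 : G θ = G (θ + 2 * Real.pi) := (hGper θ).symm
      rw [h7]
      apply hside
      · rw [abs_of_nonneg (by linarith : (0:ℝ) ≤ θ + 2 * Real.pi)]; linarith
      · rw [abs_of_nonneg (by linarith : (0:ℝ) ≤ θ + 2 * Real.pi)]; linarith
  -- Condition (C) applied at φ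
  have hLm1pos : (0:ℝ) < (L:ℝ) - 1 := by linarith
  have hmem : (1 / ((L : ℝ) - 1)) * ∑ l ∈ Finset.range (L - 1), Gl l φ ∈
      ((fun ψ => (1 / ((L : ℝ) - 1)) * ∑ l ∈ Finset.range (L - 1), Gl l ψ) ''
        Set.Icc (φB - 2 * Real.pi / L) (((L : ℝ) - 1) * (2 * Real.pi) / L - φB)) := by
    refine ⟨φ, ⟨?_, ?_⟩, rfl⟩
    · have h10 : -(2 * Real.pi) / (L:ℝ) = -(2 * Real.pi / L) := by ring
      rw [h10] at hφ1; linarith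
    · have hc : (L0:ℝ) ≤ (L:ℝ) - 1 := by linarith
      have h11 : (L0:ℝ) * (2 * Real.pi) / L ≤ ((L:ℝ) - 1) * (2 * Real.pi) / L := by
        gcongr
      linarith
  have hBdd : BddBelow ((fun ψ => (1 / ((L : ℝ) - 1)) * ∑ l ∈ Finset.range (L - 1), Gl l ψ) ''
        Set.Icc (φB - 2 * Real.pi / L) (((L : ℝ) - 1) * (2 * Real.pi) / L - φB)) := by
    refine ⟨0, ?_⟩
    rintro y ⟨ψ, _, rfl⟩
    have hs : 0 ≤ ∑ l ∈ Finset.range (L - 1), Gl l ψ :=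
      Finset.sum_nonneg (fun l _ => hGlnn l ψ)
    exact mul_nonneg (div_nonneg zero_le_one (by linarith)) hs
  have hInfle := csInf_le hBdd hmem
  have hMpos : (0:ℝ) < (M:ℝ) := by linarith
  have hbpos : (0:ℝ) < (b:ℝ) := by linarith
  have hkpos : (0:ℝ) < (k:ℝ) := by linarith
  have hL0pos : (0:ℝ) < (L0:ℝ) := by linarith
  have hCφ : GSL < (b:ℝ) / (M:ℝ) *
      ((1 / ((L : ℝ) - 1)) * ∑ l ∈ Finset.range (L - 1), Gl l φ) := by
    rw [hbL2]
    refine lt_of_lt_of_le hC ?_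
    apply mul_le_mul_of_nonneg_left hInfle
    positivity
  set S1 : ℝ := ∑ l ∈ Finset.range M, Gl l φ with hS1def
  set Sm : ℝ := ∑ l ∈ Finset.Ico M L0, Gl l φ with hSmdef
  set S2 : ℝ := ∑ l ∈ Finset.Ico L0 L, Gl l φ with hS2def
  set S2p : ℝ := ∑ l ∈ Finset.Ico L0 (L - 1), Gl l φ with hS2pdef
  clear_value S1 Sm S2 S2p
  have hsplit1 : ∑ l ∈ Finset.range L0, Gl l φ = S1 + Sm := by
    rw [hS1def, hSmdef, Finset.range_eq_Ico, Finset.range_eq_Ico]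
    exact (Finset.sum_Ico_consecutive _ (Nat.zero_le M) (by omega : M ≤ L0)).symm
  have hsplit2 : ∑ l ∈ Finset.Ico M L, Gl l φ = Sm + S2 := by
    rw [hSmdef, hS2def]
    exact (Finset.sum_Ico_consecutive _ (by omega : M ≤ L0) (by omega : L0 ≤ L)).symm
  have hsplit3 : ∑ l ∈ Finset.range (L - 1), Gl l φ = S1 + Sm + S2p := by
    rw [hS1def, hSmdef, hS2pdef, Finset.range_eq_Ico, Finset.range_eq_Ico]
    rw [← Finset.sum_Ico_consecutive (fun l => Gl l φ) (Nat.zero_le M) (by omega : M ≤ L - 1)]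
    rw [← Finset.sum_Ico_consecutive (fun l => Gl l φ) (by omega : M ≤ L0) (by omega : L0 ≤ L - 1)]
    ring
  have hS2le : S2 ≤ (k:ℝ) * GSL := by
    calc S2 = ∑ l ∈ Finset.Ico L0 L, Gl l φ := hS2def
      _ ≤ ∑ _l ∈ Finset.Ico L0 L, GSL := by
          apply Finset.sum_le_sum
          intro i hi
          obtain ⟨hi1, hi2⟩ := Finset.mem_Ico.mp hi
          exact hsid i hi1 hi2
      _ = (k:ℝ) * GSL := by
          rw [Finset.sum_const, Nat.card_Ico, nsmul_eq_mul, hkdef]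
  have hS2ple : S2p ≤ ((k:ℝ) - 1) * GSL := by
    calc S2p = ∑ l ∈ Finset.Ico L0 (L - 1), Gl l φ := hS2pdef
      _ ≤ ∑ _l ∈ Finset.Ico L0 (L - 1), GSL := by
          apply Finset.sum_le_sum
          intro i hi
          obtain ⟨hi1, hi2⟩ := Finset.mem_Ico.mp hi
          exact hsid i hi1 (by omega)
      _ = ((k:ℝ) - 1) * GSL := by
          rw [Finset.sum_const, Nat.card_Ico, nsmul_eq_mul, ← eS2p]
  have hS1nn : 0 ≤ S1 := hS1def ▸ Finset.sum_nonneg (fun l _ => hGlnn l φ)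
  have hSmnn : 0 ≤ Sm := hSmdef ▸ Finset.sum_nonneg (fun l _ => hGlnn l φ)
  have hS2pnn : 0 ≤ S2p := hS2pdef ▸ Finset.sum_nonneg (fun l _ => hGlnn l φ)
  -- multiplied-out form of condition (C)
  have hT : GSL * ((M:ℝ) * ((M:ℝ) + (b:ℝ) - 1)) < (b:ℝ) * S1 + (b:ℝ) * Sm + (b:ℝ) * S2p := by
    rw [hsplit3] at hCφ
    have hd : (0:ℝ) < (M:ℝ) * ((L:ℝ) - 1) := by positivity
    have h2' := mul_lt_mul_of_pos_right hCφ hd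
    have key : (b:ℝ) / (M:ℝ) * ((1 / ((L:ℝ) - 1)) * (S1 + Sm + S2p)) * ((M:ℝ) * ((L:ℝ) - 1))
        = (b:ℝ) * S1 + (b:ℝ) * Sm + (b:ℝ) * S2p := by
      field_simp
    rw [key] at h2'
    have hLr : (L:ℝ) - 1 = (M:ℝ) + (b:ℝ) - 1 := by linarith
    rw [hLr] at h2'
    calc GSL * ((M:ℝ) * ((M:ℝ) + (b:ℝ) - 1))
        = GSL * ((M:ℝ) * ((M:ℝ) + (b:ℝ) - 1)) := rfl
      _ < _ := by linarith [h2']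
  have hkey := stmt16_keyineq (M:ℝ) (b:ℝ) (k:ℝ) S1 Sm S2 S2p GSL
    em ek ekb ebM hGSL hS1nn hSmnn hS2pnn hS2le hS2ple hT
  rw [hGbar, hGbar, hsplit1, hsplit2, ← hS1def, ← hS2def]
  have ekL : (L:ℝ) - (L0:ℝ) = (k:ℝ) := by linarith
  have ebL : (L:ℝ) - (M:ℝ) = (b:ℝ) := by linarith
  rw [ekL, ebL, eL0]
  exact hkey
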